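/- On the 3-dimensional Lie algebra g with brackets [e_1, e_3] = -e_2, [e_2, e_3] = e_1 (Bianchi VII_0), the pair α = λe^3 (λ ≠ 0), ω = e^1∧e^2 is a cosymplectic structure, and the left-symmetric product associated to it (defined by Φ(x·y)(z) = -Φ(y)([x,z])) is given by e_1·e_1 = (1/λ²)e_3, e_2·e_2 = (1/λ²)e_3, e_3·e_1 = e_2, e_3·e_2 = -e_1, with all other products of basis vectors zero. In particular, this product is left-symmetric and its commutator recovers the Lie bracket. -/

import Mathlib

/-- The 3-dimensional Lie algebra `g_{3.5}^0` (Bianchi VII₀): basis `e₁,e₂,e₃`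
with `[e₁,e₃] = -e₂`, `[e₂,e₃] = e₁`. An element `(a,b,c)` stands for
`a e₁ + b e₂ + c e₃`, so `[x,y] = (x₂y₃ - x₃y₂, x₃y₁ - x₁y₃, 0)`. -/
def G350 : Type := ℝ × ℝ × ℝ

noncomputable instance : AddCommGroup G350 := inferInstanceAs (AddCommGroup (ℝ × ℝ × ℝ))
noncomputable instance : Module ℝ G350 := inferInstanceAs (Module ℝ (ℝ × ℝ × ℝ))
instance : Module.Finite ℝ G350 := inferInstanceAs (Module.Finite ℝ (ℝ × ℝ × ℝ))

noncomputable instance : LieRing G350 where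
  bracket x y := (x.2.1 * y.2.2 - x.2.2 * y.2.1, x.2.2 * y.1 - x.1 * y.2.2, 0)
  add_lie x y z := by
    refine Prod.ext ?_ (Prod.ext ?_ (zero_add (0:ℝ)).symm)
    · show (x.2.1 + y.2.1) * z.2.2 - (x.2.2 + y.2.2) * z.2.1 =
        (x.2.1 * z.2.2 - x.2.2 * z.2.1) + (y.2.1 * z.2.2 - y.2.2 * z.2.1)
      ring
    · show (x.2.2 + y.2.2) * z.1 - (x.1 + y.1) * z.2.2 =
        (x.2.2 * z.1 - x.1 * z.2.2) + (y.2.2 * z.1 - y.1 * z.2.2)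
      ring
  lie_add x y z := by
    refine Prod.ext ?_ (Prod.ext ?_ (zero_add (0:ℝ)).symm)
    · show x.2.1 * (y.2.2 + z.2.2) - x.2.2 * (y.2.1 + z.2.1) =
        (x.2.1 * y.2.2 - x.2.2 * y.2.1) + (x.2.1 * z.2.2 - x.2.2 * z.2.1)
      ring
    · show x.2.2 * (y.1 + z.1) - x.1 * (y.2.2 + z.2.2) =
        (x.2.2 * y.1 - x.1 * y.2.2) + (x.2.2 * z.1 - x.1 * z.2.2)
      ring
  lie_self x := by
    refine Prod.ext ?_ (Prod.ext ?_ rfl)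
    · show x.2.1 * x.2.2 - x.2.2 * x.2.1 = 0; ring
    · show x.2.2 * x.1 - x.1 * x.2.2 = 0; ring
  leibniz_lie x y z := by
    refine Prod.ext ?_ (Prod.ext ?_ (zero_add (0:ℝ)).symm)
    · show x.2.1 * 0 - x.2.2 * (y.2.2 * z.1 - y.1 * z.2.2) =
        ((x.2.2 * y.1 - x.1 * y.2.2) * z.2.2 - 0 * z.2.1) +
        (y.2.1 * 0 - y.2.2 * (x.2.2 * z.1 - x.1 * z.2.2))
      ring
    · show x.2.2 * (y.2.1 * z.2.2 - y.2.2 * z.2.1) - x.1 * 0 =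
        (0 * z.1 - (x.2.1 * y.2.2 - x.2.2 * y.2.1) * z.2.2) +
        (y.2.2 * (x.2.1 * z.2.2 - x.2.2 * z.2.1) - y.1 * 0)
      ring

noncomputable instance : LieAlgebra ℝ G350 where
  lie_smul c x y := by
    refine Prod.ext ?_ (Prod.ext ?_ (smul_zero c).symm)
    · show x.2.1 * (c * y.2.2) - x.2.2 * (c * y.2.1) =
        c * (x.2.1 * y.2.2 - x.2.2 * y.2.1)
      ring
    · show x.2.2 * (c * y.1) - x.1 * (c * y.2.2) =
        c * (x.2.2 * y.1 - x.1 * y.2.2)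
      ring

/-- On `g_{3.5}^0`, the pair `α = λe³` (`λ ≠ 0`), `ω = e¹∧e²` is a
cosymplectic structure, and the associated left-symmetric product (defined by
`Φ(x·y)(z) = -Φ(y)([x,z])`) is `e₁·e₁ = e₂·e₂ = (1/λ²)e₃`, `e₃·e₁ = e₂`,
`e₃·e₂ = -e₁`, all other products of basis vectors zero; it is left-symmetric
and its commutator recovers the Lie bracket. -/
theorem g350_cosymplectic_product (lam : ℝ) (hlam : lam ≠ 0)
    (α : G350 →ₗ[ℝ] ℝ) (ω : G350 →ₗ[ℝ] G350 →ₗ[ℝ] ℝ)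
    (hα : ∀ v : G350, α v = lam * v.2.2)
    (hω : ∀ v w : G350, ω v w = v.1 * w.2.1 - w.1 * v.2.1)
    (mul : G350 → G350 → G350)
    (hmul : ∀ x y z : G350,
        ω (mul x y) z + α (mul x y) * α z = - (ω y ⁅x, z⁆ + α y * α ⁅x, z⁆)) :
    (∀ x y : G350, ω x y = - ω y x) ∧
    (∀ x y : G350, α ⁅x, y⁆ = 0) ∧
    (∀ x y z : G350, ω ⁅x, y⁆ z + ω ⁅y, z⁆ x + ω ⁅z, x⁆ y = 0) ∧
    Function.Bijective (fun x : G350 => ω x + α x • α) ∧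
    mul ((1,0,0) : G350) ((1,0,0) : G350) = ((0, 0, 1 / lam ^ 2) : G350) ∧
    mul ((0,1,0) : G350) ((0,1,0) : G350) = ((0, 0, 1 / lam ^ 2) : G350) ∧
    mul ((0,0,1) : G350) ((1,0,0) : G350) = ((0,1,0) : G350) ∧
    mul ((0,0,1) : G350) ((0,1,0) : G350) = ((-1,0,0) : G350) ∧
    mul ((1,0,0) : G350) ((0,1,0) : G350) = 0 ∧
    mul ((0,1,0) : G350) ((1,0,0) : G350) = 0 ∧
    mul ((1,0,0) : G350) ((0,0,1) : G350) = 0 ∧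
    mul ((0,1,0) : G350) ((0,0,1) : G350) = 0 ∧
    mul ((0,0,1) : G350) ((0,0,1) : G350) = 0 ∧
    (∀ x y z : G350,
      mul (mul x y) z - mul x (mul y z) = mul (mul y x) z - mul y (mul x z)) ∧
    (∀ x y : G350, mul x y - mul y x = ⁅x, y⁆) := by
  have hb : ∀ x z : G350, ⁅x, z⁆ =
      ((x.2.1 * z.2.2 - x.2.2 * z.2.1, x.2.2 * z.1 - x.1 * z.2.2, 0) : G350) :=
    fun _ _ => rfl
  have hsub : ∀ x y : G350, x - y = ((x.1 - y.1, x.2.1 - y.2.1, x.2.2 - y.2.2) : G350) :=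
    fun _ _ => rfl
  have hext : ∀ x y : G350, x.1 = y.1 → x.2.1 = y.2.1 → x.2.2 = y.2.2 → x = y := by
    intro x y h1 h2 h3
    exact Prod.ext h1 (Prod.ext h2 h3)
  have hlam2 : lam ^ 2 ≠ 0 := pow_ne_zero 2 hlam
  have hα' : ∀ a b c : ℝ, α ((a,b,c) : G350) = lam * c := fun _ _ _ => hα _
  have hω' : ∀ (v : G350) (a b c : ℝ), ω v ((a,b,c) : G350) = v.1 * b - a * v.2.1 :=
    fun _ _ _ _ => hω _ _
  have hωl : ∀ (a b c : ℝ) (w : G350), ω ((a,b,c) : G350) w = a * w.2.1 - w.1 * b :=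
    fun _ _ _ _ => hω _ _
  have hb' : ∀ (x : G350) (a b c : ℝ), @Bracket.bracket G350 G350 _ x (a,b,c) =
      ((x.2.1 * c - x.2.2 * b, x.2.2 * a - x.1 * c, 0) : G350) := fun _ _ _ _ => rfl
  have key : ∀ x y : G350, mul x y =
      ((-(x.2.2 * y.2.1), x.2.2 * y.1, (x.1 * y.1 + x.2.1 * y.2.1) / lam ^ 2) : G350) := by
    intro x y
    have h1 := hmul x y ((1,0,0) : G350)
    have h2 := hmul x y ((0,1,0) : G350)
    have h3 := hmul x y ((0,0,1) : G350)
    simp only [hb', hα', hω', hb, hα, hω] at h1 h2 h3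
    refine hext _ _ ?_ ?_ ?_
    · simp only [show (((0:ℝ),(1:ℝ),(0:ℝ)) : G350).1 = 0 from rfl] at h2 ⊢
      norm_num at h2 ⊢
      linarith
    · norm_num at h1 ⊢
      linarith
    · norm_num at h3 ⊢
      field_simp at h3 ⊢
      nlinarith [h3]
  have keyl : ∀ (a b c : ℝ) (y : G350), mul ((a,b,c) : G350) y =
      ((-(c * y.2.1), c * y.1, (a * y.1 + b * y.2.1) / lam ^ 2) : G350) := fun _ _ _ _ => key _ _
  have keyr : ∀ (x : G350) (a b c : ℝ), mul x ((a,b,c) : G350) =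
      ((-(x.2.2 * b), x.2.2 * a, (x.1 * a + x.2.1 * b) / lam ^ 2) : G350) := fun _ _ _ _ => key _ _
  have hsub' : ∀ a b c d e f : ℝ, @HSub.hSub G350 G350 G350 _ (a,b,c) (d,e,f) =
      ((a - d, b - e, c - f) : G350) := fun _ _ _ _ _ _ => rfl
  refine ⟨?_, ?_, ?_, ⟨?_, ?_⟩, ?_, ?_, ?_, ?_, ?_, ?_, ?_, ?_, ?_, ?_, ?_⟩
  · intro x y; rw [hω, hω]; ring
  · intro x y; rw [hb, hα']; norm_num
  · intro x y z; simp only [hb, hω, hωl]; norm_num; ring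
  · -- injective
    intro x y hxy
    have h := fun v => congrArg (fun f : G350 →ₗ[ℝ] ℝ => f v) hxy
    simp only [LinearMap.add_apply, LinearMap.smul_apply, smul_eq_mul, hω, hα] at h
    have h1 := h ((1,0,0) : G350)
    have h2 := h ((0,1,0) : G350)
    have h3 := h ((0,0,1) : G350)
    norm_num at h1 h2 h3
    exact hext _ _ h2 h1 (h3.resolve_right hlam)
  · -- surjective
    intro f
    refine ⟨((f ((0,1,0) : G350), -f ((1,0,0) : G350), f ((0,0,1) : G350) / lam ^ 2) : G350), ?_⟩
    ext v
    have hv : v = v.1 • ((1,0,0) : G350) + v.2.1 • ((0,1,0) : G350) + v.2.2 • ((0,0,1) : G350) := by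
      refine hext _ _ ?_ ?_ ?_ <;>
        simp [Prod.fst_add, Prod.snd_add, Prod.smul_mk]
    simp only [LinearMap.add_apply, LinearMap.smul_apply, smul_eq_mul, hω, hα, hωl, hα']
    conv_rhs => rw [hv]
    erw [map_add, map_add, map_smul, map_smul, map_smul]
    norm_num
    field_simp
    ring
  · erw [key]; refine hext _ _ ?_ ?_ ?_ <;> norm_num
  · erw [key]; refine hext _ _ ?_ ?_ ?_ <;> norm_num
  · erw [key]; refine hext _ _ ?_ ?_ ?_ <;> norm_num
  · erw [key]; refine hext _ _ ?_ ?_ ?_ <;> norm_num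
  · erw [key]; refine hext _ _ ?_ ?_ ?_ <;> norm_num <;> rfl
  · erw [key]; refine hext _ _ ?_ ?_ ?_ <;> norm_num <;> rfl
  · erw [key]; refine hext _ _ ?_ ?_ ?_ <;> norm_num <;> rfl
  · erw [key]; refine hext _ _ ?_ ?_ ?_ <;> norm_num <;> rfl
  · erw [key]; refine hext _ _ ?_ ?_ ?_ <;> norm_num <;> rfl
  · intro x y z
    simp only [key, keyl, keyr, hsub, hsub']
    refine hext _ _ ?_ ?_ ?_ <;> simp only [] <;> field_simp <;> ring
  · intro x y
    simp only [key, hb, hsub, hsub']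
    refine hext _ _ ?_ ?_ ?_ <;> simp only [] <;> field_simp <;> ring
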